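/- arXiv:2603.13826 — 2 statements merged into one kernel-verified Lean document; each statement's English description precedes it below -/
import Mathlib

section
/- For the unnormalized Rényi entropy R_{u,α}(x; C) = (1/(1-α))·(C^{1-α}‖x‖_α^α - ‖x‖₁) with 0 < α, α ≠ 1, C > 0, and x ∈ R^n with ‖x‖_∞ ≤ C, the limit as α → 0⁺ equals C‖x‖₀ - ‖x‖₁. -/
open Finset Real Filter

noncomputable def spt {n : ℕ} (x : Fin n → ℝ) : Finset (Fin n) :=
  Finset.univ.filter (fun i => x i ≠ 0)

/-- Unnormalized Rényi entropy
`R_{u,α}(x; C) = (1/(1-α))·(∑_i C(|x_i|/C)^α − ‖x‖₁)`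
(the convention `0^α = 0` for `α > 0` is automatic for `Real.rpow`). -/
noncomputable def Rua {n : ℕ} (α : ℝ) (x : Fin n → ℝ) (C : ℝ) : ℝ :=
  (1 / (1 - α)) * ((∑ i, C * (|x i| / C) ^ α) - ∑ i, |x i|)

/-- As α → 0⁺, the unnormalized Rényi entropy tends to `C‖x‖₀ − ‖x‖₁`. -/
theorem Rua_tendsto_zero {n : ℕ} (x : Fin n → ℝ) (C : ℝ) (hC : 0 < C)
    (hbound : ∀ i, |x i| ≤ C) :
    Filter.Tendsto (fun α : ℝ => Rua α x C)
      (nhdsWithin 0 (Set.Ioi 0))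
      (nhds (C * ((spt x).card : ℝ) - ∑ i, |x i|)) := by
  have h1 : Tendsto (fun α : ℝ => (1:ℝ)/(1-α)) (nhdsWithin 0 (Set.Ioi 0)) (nhds 1) := by
    have hc : Tendsto (fun α : ℝ => (1:ℝ)/(1-α)) (nhds 0) (nhds (1/(1-0))) := by
      apply Tendsto.div tendsto_const_nhds (tendsto_const_nhds.sub tendsto_id)
      norm_num
    simpa using hc.mono_left nhdsWithin_le_nhds
  have h2 : Tendsto (fun α : ℝ => ∑ i, C * (|x i| / C) ^ α)
      (nhdsWithin 0 (Set.Ioi 0)) (nhds (∑ i, if x i = 0 then (0:ℝ) else C)) := by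
    apply tendsto_finset_sum
    intro i _
    by_cases h : x i = 0
    · simp only [h, if_true, abs_zero, zero_div]
      apply Tendsto.congr' _ tendsto_const_nhds
      filter_upwards [self_mem_nhdsWithin] with α (hα : α ∈ Set.Ioi 0)
      rw [Real.zero_rpow (ne_of_gt hα), mul_zero]
    · have ht : 0 < |x i| / C := div_pos (abs_pos.mpr h) hC
      have : ContinuousAt (fun α : ℝ => C * (|x i| / C) ^ α) 0 :=
        (continuousAt_const.mul (Real.continuousAt_const_rpow (ne_of_gt ht)))
      have h3 := this.tendsto.mono_left
        (nhdsWithin_le_nhds : nhdsWithin (0:ℝ) (Set.Ioi 0) ≤ nhds 0)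
      simpa [h, Real.rpow_zero] using h3
  have hsum : (∑ i, if x i = 0 then (0:ℝ) else C) = C * ((spt x).card : ℝ) := by
    rw [Finset.sum_ite, Finset.sum_const, Finset.sum_const]
    simp [spt, mul_comm, Finset.filter_not]
  rw [hsum] at h2
  have hmain := h1.mul (h2.sub (tendsto_const_nhds (x := ∑ i, |x i|)))
  have heq : (fun α : ℝ => Rua α x C) =
      fun α => (1/(1-α)) * ((∑ i, C * (|x i| / C) ^ α) - ∑ i, |x i|) := rfl
  rw [heq]
  simpa using hmain
end

section
/- (RIP cross-term bound) Suppose A ∈ R^{m×n} satisfies the restricted isometry property of order 2k with constant δ ∈ (0,1): (1-δ)‖u‖₂² ≤ ‖Au‖₂² ≤ (1+δ)‖u‖₂² for all 2k-sparse u. Then for all u, v ∈ R^n with disjoint supports and |supp(u)| + |supp(v)| ≤ 2k, one has |⟨Au, Av⟩| ≤ δ‖u‖₂‖v‖₂. -/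
open Finset Real Matrix

/-- A vector is s-sparse if it has at most s nonzero entries. -/
def IsSparse {n : ℕ} (s : ℕ) (u : Fin n → ℝ) : Prop :=
  (Finset.univ.filter (fun i => u i ≠ 0)).card ≤ s

/-- Euclidean norm as `√(∑ uᵢ²)`. -/
noncomputable def l2norm {n : ℕ} (u : Fin n → ℝ) : ℝ :=
  Real.sqrt (∑ i, (u i) ^ 2)

/-- `A` satisfies the RIP of order `s` with constant `δ`. -/
def SatisfiesRIP {m n : ℕ} (A : Matrix (Fin m) (Fin n) ℝ) (s : ℕ) (δ : ℝ) : Prop :=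
  ∀ u : Fin n → ℝ, IsSparse s u →
    (1 - δ) * (l2norm u) ^ 2 ≤ (l2norm (A.mulVec u)) ^ 2 ∧
    (l2norm (A.mulVec u)) ^ 2 ≤ (1 + δ) * (l2norm u) ^ 2

lemma l2norm_sq {n : ℕ} (u : Fin n → ℝ) : (l2norm u) ^ 2 = ∑ i, (u i) ^ 2 := by
  rw [l2norm, Real.sq_sqrt]; positivity

lemma sparse_aux {n k : ℕ} (u v w : Fin n → ℝ)
    (hw : ∀ i, u i = 0 → v i = 0 → w i = 0)
    (hcard : (Finset.univ.filter (fun i => u i ≠ 0)).card +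
             (Finset.univ.filter (fun i => v i ≠ 0)).card ≤ 2 * k) :
    IsSparse (2 * k) w := by
  unfold IsSparse
  refine le_trans (le_trans (Finset.card_le_card ?_) (Finset.card_union_le _ _)) hcard
  intro i hi
  simp only [mem_filter, mem_union, mem_univ, true_and] at *
  by_contra h
  push_neg at h
  exact hi (hw i h.1 h.2)

lemma key {m n k : ℕ} (A : Matrix (Fin m) (Fin n) ℝ) (δ : ℝ)
    (hRIP : SatisfiesRIP A (2 * k) δ) (u v : Fin n → ℝ)
    (hdisj : ∀ i, u i = 0 ∨ v i = 0)
    (hcard : (Finset.univ.filter (fun i => u i ≠ 0)).card +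
             (Finset.univ.filter (fun i => v i ≠ 0)).card ≤ 2 * k) :
    ∑ j, A.mulVec u j * A.mulVec v j ≤ δ / 2 * ((l2norm u) ^ 2 + (l2norm v) ^ 2) := by
  have hw := (hRIP (u + v) (sparse_aux u v _ (fun i h1 h2 => by simp [h1, h2]) hcard)).2
  have hz := (hRIP (u - v) (sparse_aux u v _ (fun i h1 h2 => by simp [h1, h2]) hcard)).1
  have huv : ∑ i, u i * v i = 0 :=
    Finset.sum_eq_zero (fun i _ => by rcases hdisj i with h | h <;> simp [h])
  have hsum : (l2norm (u + v)) ^ 2 = (l2norm u) ^ 2 + (l2norm v) ^ 2 := by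
    simp only [l2norm_sq, Pi.add_apply]
    have : ∀ i : Fin n, (u i + v i) ^ 2 = u i ^ 2 + v i ^ 2 + 2 * (u i * v i) := fun i => by ring
    simp only [this, Finset.sum_add_distrib, ← Finset.mul_sum, huv]
    ring
  have hdiff : (l2norm (u - v)) ^ 2 = (l2norm u) ^ 2 + (l2norm v) ^ 2 := by
    simp only [l2norm_sq, Pi.sub_apply]
    have : ∀ i : Fin n, (u i - v i) ^ 2 = u i ^ 2 + v i ^ 2 - 2 * (u i * v i) := fun i => by ring
    simp only [this, Finset.sum_sub_distrib, Finset.sum_add_distrib, ← Finset.mul_sum, huv]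
    ring
  have hAsum : (l2norm (A.mulVec (u + v))) ^ 2 =
      (l2norm (A.mulVec u)) ^ 2 + (l2norm (A.mulVec v)) ^ 2 +
      2 * ∑ j, A.mulVec u j * A.mulVec v j := by
    simp only [l2norm_sq, Matrix.mulVec_add, Pi.add_apply]
    have : ∀ j : Fin m, (A.mulVec u j + A.mulVec v j) ^ 2 =
        A.mulVec u j ^ 2 + A.mulVec v j ^ 2 + 2 * (A.mulVec u j * A.mulVec v j) := fun j => by ring
    simp only [this, Finset.sum_add_distrib, ← Finset.mul_sum]
  have hAdiff : (l2norm (A.mulVec (u - v))) ^ 2 =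
      (l2norm (A.mulVec u)) ^ 2 + (l2norm (A.mulVec v)) ^ 2 -
      2 * ∑ j, A.mulVec u j * A.mulVec v j := by
    simp only [l2norm_sq, Matrix.mulVec_sub, Pi.sub_apply]
    have : ∀ j : Fin m, (A.mulVec u j - A.mulVec v j) ^ 2 =
        A.mulVec u j ^ 2 + A.mulVec v j ^ 2 - 2 * (A.mulVec u j * A.mulVec v j) := fun j => by ring
    simp only [this, Finset.sum_sub_distrib, Finset.sum_add_distrib, ← Finset.mul_sum]
  rw [hsum, hAsum] at hw
  rw [hdiff, hAdiff] at hz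
  linarith

/-- RIP cross-term bound: if `A` satisfies the 2k-RIP with constant δ ∈ (0,1),
then for vectors u, v with disjoint supports and total support size at most 2k,
`|⟨Au, Av⟩| ≤ δ‖u‖₂‖v‖₂`. -/
theorem rip_cross_term {m n k : ℕ} (A : Matrix (Fin m) (Fin n) ℝ)
    (δ : ℝ) (hδ0 : 0 < δ) (hδ1 : δ < 1) (hRIP : SatisfiesRIP A (2 * k) δ)
    (u v : Fin n → ℝ)
    (hdisj : ∀ i, u i = 0 ∨ v i = 0)
    (hcard : (Finset.univ.filter (fun i => u i ≠ 0)).card +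
             (Finset.univ.filter (fun i => v i ≠ 0)).card ≤ 2 * k) :
    |∑ j, A.mulVec u j * A.mulVec v j| ≤ δ * l2norm u * l2norm v := by
  set a := l2norm u with ha
  set b := l2norm v with hb
  have ha0 : 0 ≤ a := Real.sqrt_nonneg _
  have hb0 : 0 ≤ b := Real.sqrt_nonneg _
  -- zero cases
  by_cases hau : a = 0
  · have hu0 : u = 0 := by
      funext i
      have hs : ∑ i, (u i) ^ 2 = 0 := by
        have := l2norm_sq u; rw [← ha, hau] at this; linarith [this]
      have := (Finset.sum_eq_zero_iff_of_nonneg (fun i _ => sq_nonneg (u i))).1 hs i (mem_univ i)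
      exact (pow_eq_zero_iff two_ne_zero).mp this
    simp [hu0, hau, Matrix.mulVec_zero]
  by_cases hbv : b = 0
  · have hv0 : v = 0 := by
      funext i
      have hs : ∑ i, (v i) ^ 2 = 0 := by
        have := l2norm_sq v; rw [← hb, hbv] at this; linarith [this]
      have := (Finset.sum_eq_zero_iff_of_nonneg (fun i _ => sq_nonneg (v i))).1 hs i (mem_univ i)
      exact (pow_eq_zero_iff two_ne_zero).mp this
    simp [hv0, hbv, Matrix.mulVec_zero]
  have hap : 0 < a := lt_of_le_of_ne ha0 (Ne.symm hau)
  have hbp : 0 < b := lt_of_le_of_ne hb0 (Ne.symm hbv)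
  -- scaled vectors
  have hl2smul : ∀ (c : ℝ) (w : Fin n → ℝ), 0 ≤ c → l2norm (c • w) = c * l2norm w := by
    intro c w hc
    simp only [l2norm, Pi.smul_apply, smul_eq_mul, mul_pow, ← Finset.mul_sum]
    rw [Real.sqrt_mul (by positivity), Real.sqrt_sq hc]
  have hcard1 : ∀ (c : ℝ), c ≠ 0 → ∀ w : Fin n → ℝ,
      (Finset.univ.filter (fun i => (c • w) i ≠ 0)).card =
      (Finset.univ.filter (fun i => w i ≠ 0)).card := by
    intro c hc w
    congr 1
    apply Finset.filter_congr
    intro i _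
    simp [hc]
  set S := ∑ j, A.mulVec u j * A.mulVec v j with hS
  have hSmul : ∀ (c d : ℝ), ∑ j, A.mulVec (c • u) j * A.mulVec (d • v) j = c * d * S := by
    intro c d
    simp only [Matrix.mulVec_smul, Pi.smul_apply, smul_eq_mul, hS, Finset.mul_sum]
    apply Finset.sum_congr rfl
    intro j _
    ring
  -- upper bound
  have h1 := key A δ hRIP (b • u) (a • v)
      (fun i => by rcases hdisj i with h | h <;> simp [h])
      (by rw [hcard1 b hbv u, hcard1 a hau v]; exact hcard)
  rw [hSmul, hl2smul b u hb0, hl2smul a v ha0] at h1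
  have h2 := key A δ hRIP (b • u) (a • (-v))
      (fun i => by rcases hdisj i with h | h <;> simp [h])
      (by rw [hcard1 b hbv u, hcard1 a hau (-v)]
          have : (Finset.univ.filter (fun i => (-v) i ≠ 0)) =
                 (Finset.univ.filter (fun i => v i ≠ 0)) := by
            apply Finset.filter_congr; intro i _; simp
          rw [this]; exact hcard)
  have hSneg : ∑ j, A.mulVec (b • u) j * A.mulVec (a • (-v)) j = -(b * a * S) := by
    simp only [Matrix.mulVec_smul, Matrix.mulVec_neg, Pi.smul_apply, Pi.neg_apply,
      smul_eq_mul, hS, Finset.mul_sum, ← Finset.sum_neg_distrib]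
    apply Finset.sum_congr rfl
    intro j _
    ring
  have hlneg : l2norm (-v) = b := by
    rw [hb, l2norm, l2norm]
    congr 1
    apply Finset.sum_congr rfl
    intro i _
    simp [neg_pow]
  rw [hSneg, hl2smul b u hb0, hl2smul a (-v) ha0, hlneg] at h2
  have hub : S ≤ δ * a * b := by nlinarith [mul_pos hap hbp]
  have hlb : -(δ * a * b) ≤ S := by nlinarith [mul_pos hap hbp]
  rw [abs_le]
  constructor <;> linarith
end
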